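/- Let (Y, ν) be a measure space with ν σ-finite, let γ ∈ (0,1], ε₀ ≥ 0, ε ≥ 0, and let μ, μ', ω be probability densities on Y with respect to ν satisfying γ·ω(y) ≤ μ(y) ≤ e^{ε₀}·γ·ω(y) and γ·ω(y) ≤ μ'(y) ≤ e^{ε₀}·γ·ω(y) for ν-a.e. y (as holds when ω is the blanket distribution and γ the total variation similarity of an ε₀-LDP local randomizer with output densities including μ and μ'). Let W ~ ω and L = (μ(W) − e^ε·μ'(W))/ω(W). Then: (1) E[L] = 1 − e^ε; (2) γ·e^{−ε₀}·(1 − e^{ε+2ε₀}) ≤ L ≤ γ·e^{ε₀}·(1 − e^{ε−2ε₀}) almost surely; (3) E[L²] ≤ γ·e^{ε₀}·(e^{2ε} + 1) − 2·γ²·e^{ε−2ε₀}. -/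

import Mathlib

open MeasureTheory
open scoped ENNReal

set_option maxHeartbeats 1000000 in
/-- properties of the privacy amplification random variable.
If `μ, μ', ω` are probability densities w.r.t. a σ-finite `ν` with
`γ·ω ≤ μ ≤ e^{ε₀}·γ·ω` and `γ·ω ≤ μ' ≤ e^{ε₀}·γ·ω` a.e. (as for the blanket `ω` and
total variation similarity `γ` of an `ε₀`-LDP local randomizer), `W ~ ω` and
`L = (μ(W) − e^ε·μ'(W))/ω(W)`, then (1) `E[L] = 1 − e^ε`;
(2) `γe^{−ε₀}(1 − e^{ε+2ε₀}) ≤ L ≤ γe^{ε₀}(1 − e^{ε−2ε₀})` a.s.;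
(3) `E[L²] ≤ γe^{ε₀}(e^{2ε} + 1) − 2γ²e^{ε−2ε₀}`. -/
theorem stmt13 {Y : Type*} [MeasurableSpace Y] (ν : Measure Y) [SigmaFinite ν]
    (γ ε₀ ε : ℝ) (hγ : γ ∈ Set.Ioc (0:ℝ) 1) (hε₀ : 0 ≤ ε₀) (hε : 0 ≤ ε)
    (μ μ' ω : Y → ℝ)
    (hμmeas : Measurable μ) (hμ'meas : Measurable μ') (hωmeas : Measurable ω)
    (hμnn : ∀ y, 0 ≤ μ y) (hμ'nn : ∀ y, 0 ≤ μ' y) (hωnn : ∀ y, 0 ≤ ω y)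
    (hμ1 : ∫ y, μ y ∂ν = 1) (hμ'1 : ∫ y, μ' y ∂ν = 1) (hω1 : ∫ y, ω y ∂ν = 1)
    (hμlb : ∀ᵐ y ∂ν, γ * ω y ≤ μ y)
    (hμub : ∀ᵐ y ∂ν, μ y ≤ Real.exp ε₀ * (γ * ω y))
    (hμ'lb : ∀ᵐ y ∂ν, γ * ω y ≤ μ' y)
    (hμ'ub : ∀ᵐ y ∂ν, μ' y ≤ Real.exp ε₀ * (γ * ω y))
    (L : Y → ℝ) (hL : ∀ y, L y = (μ y - Real.exp ε * μ' y) / ω y) :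
    (∫ y, L y ∂(ν.withDensity fun y => ENNReal.ofReal (ω y)) = 1 - Real.exp ε) ∧
    (∀ᵐ y ∂(ν.withDensity fun y => ENNReal.ofReal (ω y)),
      γ * Real.exp (-ε₀) * (1 - Real.exp (ε + 2 * ε₀)) ≤ L y ∧
        L y ≤ γ * Real.exp ε₀ * (1 - Real.exp (ε - 2 * ε₀))) ∧
    (∫ y, (L y) ^ 2 ∂(ν.withDensity fun y => ENNReal.ofReal (ω y))
      ≤ γ * Real.exp ε₀ * (Real.exp (2 * ε) + 1) - 2 * γ ^ 2 * Real.exp (ε - 2 * ε₀)) := by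
  obtain ⟨hγ0, hγ1⟩ := hγ
  have hE0ge : (1:ℝ) ≤ Real.exp ε₀ := Real.one_le_exp hε₀
  have hEege : (1:ℝ) ≤ Real.exp ε := Real.one_le_exp hε
  have hE0pos : (0:ℝ) < Real.exp ε₀ := Real.exp_pos _
  have hEepos : (0:ℝ) < Real.exp ε := Real.exp_pos _
  set E0 := Real.exp ε₀
  set Ee := Real.exp ε
  have hiE0 : E0⁻¹ * E0 = 1 := inv_mul_cancel₀ hE0pos.ne'
  have hiE0le : E0⁻¹ ≤ 1 := by
    rw [inv_le_one_iff₀]; right; exact hE0ge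
  have hiE0pos : 0 < E0⁻¹ := by positivity
  have hexp1 : Real.exp (ε + 2 * ε₀) = Ee * (E0 * E0) := by
    rw [show ε + 2 * ε₀ = ε + (ε₀ + ε₀) by ring, Real.exp_add, Real.exp_add]
  have hexp2 : Real.exp (ε - 2 * ε₀) = Ee * (E0⁻¹ * E0⁻¹) := by
    rw [show ε - 2 * ε₀ = ε + (-ε₀ + -ε₀) by ring, Real.exp_add, Real.exp_add,
      Real.exp_neg]
  have hμint : Integrable μ ν := by
    by_contra h; rw [integral_undef h] at hμ1; norm_num at hμ1
  have hμ'int : Integrable μ' ν := by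
    by_contra h; rw [integral_undef h] at hμ'1; norm_num at hμ'1
  have hLmeas : Measurable L := by
    have hfun : L = fun y => (μ y - Ee * μ' y) / ω y := funext hL
    rw [hfun]
    exact (hμmeas.sub (measurable_const.mul hμ'meas)).div hωmeas
  have hmeasρ : Measurable fun y => (ω y).toNNReal := hωmeas.real_toNNReal
  have hP : (ν.withDensity fun y => ENNReal.ofReal (ω y))
      = ν.withDensity (fun y => ((ω y).toNNReal : ℝ≥0∞)) := rfl
  have hInt : ∀ f : Y → ℝ, ∫ y, f y ∂(ν.withDensity fun y => ENNReal.ofReal (ω y))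
      = ∫ y, ω y * f y ∂ν := by
    intro f
    rw [hP, integral_withDensity_eq_integral_smul hmeasρ f]
    refine integral_congr_ae (Filter.Eventually.of_forall fun y => ?_)
    simp [NNReal.smul_def, Real.coe_toNNReal _ (hωnn y)]
  refine ⟨?_, ?_, ?_⟩
  · -- Part 1
    have key : (fun y => ω y * L y) =ᵐ[ν] fun y => μ y - Ee * μ' y := by
      filter_upwards [hμub, hμ'ub] with y h1 h2
      rw [hL y]
      rcases eq_or_lt_of_le (hωnn y) with h0 | h0
      · have hμ0 : μ y = 0 := le_antisymm (by rw [← h0] at h1; simpa using h1) (hμnn y)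
        have hμ'0 : μ' y = 0 := le_antisymm (by rw [← h0] at h2; simpa using h2) (hμ'nn y)
        simp [← h0, hμ0, hμ'0]
      · field_simp
    rw [hInt L, integral_congr_ae key,
      integral_sub hμint (hμ'int.const_mul _), integral_const_mul, hμ1, hμ'1, mul_one]
  · -- Part 2
    rw [ae_withDensity_iff hωmeas.ennreal_ofReal]
    filter_upwards [hμlb, hμub, hμ'lb, hμ'ub] with y h1 h2 h3 h4 hne
    have hω : 0 < ω y := by
      rcases eq_or_lt_of_le (hωnn y) with h0 | h0
      · exact absurd (by simp [← h0]) hne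
      · exact h0
    have hexp3 : Real.exp (-ε₀) = E0⁻¹ := Real.exp_neg _
    constructor
    · rw [hL y, hexp3, hexp1, le_div_iff₀ hω]
      have hre : γ * E0⁻¹ * (1 - Ee * (E0 * E0)) * ω y
          = γ * E0⁻¹ * ω y - γ * Ee * E0 * ω y := by
        field_simp
      rw [hre]
      nlinarith [mul_le_mul_of_nonneg_left h4 hEepos.le,
        mul_le_mul_of_nonneg_left hiE0le (mul_pos hγ0 hω).le]
    · rw [hL y, hexp2, div_le_iff₀ hω]
      have hre : γ * E0 * (1 - Ee * (E0⁻¹ * E0⁻¹)) * ω y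
          = γ * E0 * ω y - γ * Ee * E0⁻¹ * ω y := by
        field_simp
      rw [hre]
      nlinarith [mul_le_mul_of_nonneg_left h3 hEepos.le,
        mul_le_mul_of_nonneg_left hiE0le (mul_pos hγ0 (mul_pos hEepos hω)).le]
  · -- Part 3
    rw [hInt (fun y => L y ^ 2)]
    have hbd : ∀ᵐ y ∂ν, ω y * L y ^ 2
        ≤ γ * E0 * μ y + (Ee ^ 2 * γ * E0 - 2 * Ee * γ) * μ' y := by
      filter_upwards [hμlb, hμub, hμ'lb, hμ'ub] with y h1 h2 h3 h4
      rw [hL y]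
      rcases eq_or_lt_of_le (hωnn y) with h0 | h0
      · have hμ0 : μ y = 0 := le_antisymm (by rw [← h0] at h2; simpa using h2) (hμnn y)
        have hμ'0 : μ' y = 0 := le_antisymm (by rw [← h0] at h4; simpa using h4) (hμ'nn y)
        simp [← h0, hμ0, hμ'0]
      · rw [div_pow]
        have hre : ω y * ((μ y - Ee * μ' y) ^ 2 / ω y ^ 2)
            = (μ y - Ee * μ' y) ^ 2 / ω y := by
          field_simp
        rw [hre, div_le_iff₀ h0]
        nlinarith [mul_le_mul_of_nonneg_left h2 (hμnn y),
          mul_le_mul_of_nonneg_left (mul_le_mul_of_nonneg_left h4 (hμ'nn y))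
            (mul_pos hEepos hEepos).le,
          mul_le_mul_of_nonneg_left (mul_le_mul_of_nonneg_left h1 (hμ'nn y))
            (by positivity : (0:ℝ) ≤ 2 * Ee)]
    have hhint : Integrable
        (fun y => γ * E0 * μ y + (Ee ^ 2 * γ * E0 - 2 * Ee * γ) * μ' y) ν :=
      (hμint.const_mul _).add (hμ'int.const_mul _)
    have hgint : Integrable (fun y => ω y * L y ^ 2) ν := by
      refine hhint.mono' ((hωmeas.mul (hLmeas.pow_const 2)).aestronglyMeasurable) ?_
      filter_upwards [hbd] with y hy
      rwa [Real.norm_of_nonneg (mul_nonneg (hωnn y) (sq_nonneg _))]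
    have hle : ∫ y, ω y * L y ^ 2 ∂ν
        ≤ ∫ y, γ * E0 * μ y + (Ee ^ 2 * γ * E0 - 2 * Ee * γ) * μ' y ∂ν :=
      integral_mono_ae hgint hhint hbd
    have hIh : ∫ y, γ * E0 * μ y + (Ee ^ 2 * γ * E0 - 2 * Ee * γ) * μ' y ∂ν
        = γ * E0 + (Ee ^ 2 * γ * E0 - 2 * Ee * γ) := by
      rw [integral_add (hμint.const_mul _) (hμ'int.const_mul _),
        integral_const_mul, integral_const_mul, hμ1, hμ'1, mul_one, mul_one]
    rw [hIh] at hle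
    refine hle.trans ?_
    have hexp4 : Real.exp (2 * ε) = Ee ^ 2 := by
      rw [two_mul, Real.exp_add, sq]
    rw [hexp2, hexp4]
    have hi2 : E0⁻¹ * E0⁻¹ ≤ 1 := by
      nlinarith [mul_le_mul_of_nonneg_left hiE0le hiE0pos.le]
    have hk : γ ^ 2 * (E0⁻¹ * E0⁻¹) ≤ γ := by
      nlinarith [mul_le_mul_of_nonneg_left hi2 (sq_nonneg γ)]
    nlinarith [mul_le_mul_of_nonneg_left hk (by positivity : (0:ℝ) ≤ 2 * Ee)]
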